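/- Let p ≥ 2 be a real number, let λ > 0, θ₁ > 0, θ₂ ≥ 0, θ₃ ≥ 0, and set θ̃ = θ₁ − (θ₂ + θ₃)/λ; assume θ̃ > 0. Then for all real numbers x, y ≥ 0 with √λ · x ≤ y, one has −p θ₁ x^{p−2} y² + p θ₂ x^p + p θ₃ x^{p−2} ≤ −(p − 1/2) λ θ̃ x^p − (θ̃/2) x^{p−2} y² + 2 θ₃ ((p−2)/p)^{(p−2)/2}. -/

import Mathlib

/-- Calculus fact: for `p ≥ 2` and `x > 0`,
`p * x^(p-2) - p * x^p ≤ 2 * ((p-2)/p)^((p-2)/2)`. -/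
lemma key2_aux (p x : ℝ) (hp : 2 ≤ p) (hx : 0 < x) :
    p * x ^ (p - 2) - p * x ^ p ≤ 2 * ((p - 2) / p) ^ ((p - 2) / 2) := by
  have hp0 : (0:ℝ) < p := by linarith
  have hc0 : (0:ℝ) ≤ ((p - 2) / p) ^ ((p - 2) / 2) :=
    Real.rpow_nonneg (div_nonneg (by linarith) hp0.le) _
  rcases le_or_gt 1 x with h1 | h1
  · have hle : x ^ (p - 2) ≤ x ^ p :=
      Real.rpow_le_rpow_of_exponent_le h1 (by linarith)
    nlinarith
  · rcases eq_or_lt_of_le hp with hp2 | hp2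
    · -- p = 2
      subst hp2
      have e0 : x ^ ((2:ℝ) - 2) = 1 := by norm_num
      have e2 : x ^ (2:ℝ) = x * x := by
        rw [show (2:ℝ) = ((2:ℕ):ℝ) by norm_num, Real.rpow_natCast]; ring
      have e1 : (((2:ℝ) - 2) / 2 : ℝ) = 0 := by norm_num
      rw [e0, e2, e1, Real.rpow_zero]
      nlinarith [mul_self_nonneg x]
    · -- 2 < p, use weighted AM-GM
      have hpm2 : (0:ℝ) < p - 2 := by linarith
      have hx2 : x ^ (2:ℕ) ≤ 1 := by nlinarith
      have hw₁ : (0:ℝ) ≤ (p - 2) / p := by positivity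
      have hw₂ : (0:ℝ) ≤ 2 / p := by positivity
      have ha : (0:ℝ) ≤ x ^ (2:ℕ) * (p / (p - 2)) := by positivity
      have hb : (0:ℝ) ≤ (1 - x ^ (2:ℕ)) * (p / 2) := by
        apply mul_nonneg (by linarith) (by positivity)
      have hw : (p - 2) / p + 2 / p = 1 := by field_simp; ring
      have hg := Real.geom_mean_le_arith_mean2_weighted hw₁ hw₂ ha hb hw
      have hrhs : (p - 2) / p * (x ^ (2:ℕ) * (p / (p - 2))) +
          2 / p * ((1 - x ^ (2:ℕ)) * (p / 2)) = 1 := by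
        field_simp; ring
      rw [hrhs] at hg
      -- raise to power p/2
      have hgn : (0:ℝ) ≤ (x ^ (2:ℕ) * (p / (p - 2))) ^ ((p - 2) / p) *
          ((1 - x ^ (2:ℕ)) * (p / 2)) ^ (2 / p) := by
        apply mul_nonneg <;> exact Real.rpow_nonneg (by assumption) _
      have hpow : ((x ^ (2:ℕ) * (p / (p - 2))) ^ ((p - 2) / p) *
          ((1 - x ^ (2:ℕ)) * (p / 2)) ^ (2 / p)) ^ (p / 2) ≤ 1 :=
        Real.rpow_le_one hgn hg (by positivity)
      rw [Real.mul_rpow (Real.rpow_nonneg ha _) (Real.rpow_nonneg hb _),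
        ← Real.rpow_mul ha, ← Real.rpow_mul hb,
        show (p - 2) / p * (p / 2) = (p - 2) / 2 by field_simp,
        show 2 / p * (p / 2) = 1 by field_simp,
        Real.rpow_one,
        Real.mul_rpow (by positivity) (by positivity : (0:ℝ) ≤ p / (p - 2)),
        ← Real.rpow_natCast x 2, ← Real.rpow_mul hx.le,
        show ((2:ℕ):ℝ) * ((p - 2) / 2) = p - 2 by push_cast; ring] at hpow
      -- hpow : x^(p-2) * (p/(p-2))^((p-2)/2) * ((1 - x^(2:ℝ... )) * (p/2)) ≤ 1
      have hK : ((p - 2) / p) ^ ((p - 2) / 2) * (p / (p - 2)) ^ ((p - 2) / 2) = 1 := by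
        rw [← Real.mul_rpow (by positivity) (by positivity),
          show (p - 2) / p * (p / (p - 2)) = 1 by field_simp, Real.one_rpow]
      have hxp : x ^ (p - 2) * x ^ ((2:ℕ):ℝ) = x ^ p := by
        rw [← Real.rpow_add hx]; norm_num
      have hmul := mul_le_mul_of_nonneg_left hpow hc0
      have hkey : ((p - 2) / p) ^ ((p - 2) / 2) *
          (x ^ (p - 2) * (p / (p - 2)) ^ ((p - 2) / 2) * ((1 - x ^ ((2:ℕ):ℝ)) * (p / 2)))
          = (((p - 2) / p) ^ ((p - 2) / 2) * (p / (p - 2)) ^ ((p - 2) / 2)) *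
            (p * x ^ (p - 2) - p * (x ^ (p - 2) * x ^ ((2:ℕ):ℝ))) / 2 := by
        ring
      rw [hkey, hK, hxp, one_mul, mul_one] at hmul
      linarith

theorem stmt_11 (p lam θ₁ θ₂ θ₃ : ℝ) (hp : 2 ≤ p) (hlam : 0 < lam)
    (hθ₁ : 0 < θ₁) (hθ₂ : 0 ≤ θ₂) (hθ₃ : 0 ≤ θ₃)
    (hθ : 0 < θ₁ - (θ₂ + θ₃) / lam) :
    ∀ x y : ℝ, 0 ≤ x → 0 ≤ y → Real.sqrt lam * x ≤ y →
      -p * θ₁ * x ^ (p - 2) * y ^ (2 : ℕ) + p * θ₂ * x ^ p + p * θ₃ * x ^ (p - 2)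
        ≤ -(p - 1 / 2) * lam * (θ₁ - (θ₂ + θ₃) / lam) * x ^ p
          - ((θ₁ - (θ₂ + θ₃) / lam) / 2) * x ^ (p - 2) * y ^ (2 : ℕ)
          + 2 * θ₃ * ((p - 2) / p) ^ ((p - 2) / 2) := by
  intro x y hx hy hxy
  have hp0 : (0:ℝ) < p := by linarith
  have hc0 : (0:ℝ) ≤ ((p - 2) / p) ^ ((p - 2) / 2) :=
    Real.rpow_nonneg (div_nonneg (by linarith) hp0.le) _
  rcases hx.eq_or_lt with hx0 | hx0
  · -- x = 0
    rcases eq_or_lt_of_le hp with hp2 | hp2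
    · subst hp2
      rw [← hx0]
      have e0 : (0:ℝ) ^ ((2:ℝ) - 2) = 1 := by norm_num
      have e2 : (0:ℝ) ^ (2:ℝ) = 0 := by
        rw [Real.zero_rpow (by norm_num)]
      have e1 : (((2:ℝ) - 2) / 2 : ℝ) = 0 := by norm_num
      rw [e0, e2, e1, Real.rpow_zero]
      have hle : θ₁ - (θ₂ + θ₃) / lam ≤ θ₁ := by
        have : 0 ≤ (θ₂ + θ₃) / lam := by positivity
        linarith
      nlinarith [sq_nonneg y]
    · rw [← hx0, Real.zero_rpow (by linarith : p - 2 ≠ 0),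
        Real.zero_rpow (by linarith : p ≠ 0)]
      nlinarith
  · -- x > 0
    have hy2 : lam * x ^ (2:ℕ) ≤ y ^ (2:ℕ) := by
      have h := pow_le_pow_left₀ (by positivity) hxy 2
      rw [mul_pow, Real.sq_sqrt hlam.le] at h
      exact h
    have hxp2 : (0:ℝ) ≤ x ^ (p - 2) := Real.rpow_nonneg hx _
    have hxp : x ^ (p - 2) * x ^ (2:ℕ) = x ^ p := by
      rw [← Real.rpow_natCast x 2, ← Real.rpow_add hx0]; norm_num
    have hAB : lam * x ^ p ≤ x ^ (p - 2) * y ^ (2:ℕ) := by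
      calc lam * x ^ p = x ^ (p - 2) * (lam * x ^ (2:ℕ)) := by rw [← hxp]; ring
        _ ≤ x ^ (p - 2) * y ^ (2:ℕ) := by
            exact mul_le_mul_of_nonneg_left hy2 hxp2
    have h1 : 0 ≤ (p - 1/2) * (θ₁ - (θ₂ + θ₃) / lam) *
        (x ^ (p - 2) * y ^ (2:ℕ) - lam * x ^ p) := by
      apply mul_nonneg (mul_nonneg (by linarith) hθ.le) (by linarith)
    have h2 : p * (θ₂ + θ₃) * x ^ p ≤ p * ((θ₂ + θ₃) / lam) * (x ^ (p - 2) * y ^ (2:ℕ)) := by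
      calc p * (θ₂ + θ₃) * x ^ p = p * ((θ₂ + θ₃) / lam) * (lam * x ^ p) := by
            field_simp
        _ ≤ p * ((θ₂ + θ₃) / lam) * (x ^ (p - 2) * y ^ (2:ℕ)) := by
            apply mul_le_mul_of_nonneg_left hAB (by positivity)
    have h3 : θ₃ * (p * x ^ (p - 2) - p * x ^ p) ≤
        θ₃ * (2 * ((p - 2) / p) ^ ((p - 2) / 2)) :=
      mul_le_mul_of_nonneg_left (key2_aux p x hp hx0) hθ₃
    nlinarith [h1, h2, h3]
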